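/- Let {C(x) | x ∈ Ω} be a family of pairwise commuting diagonalizable n×n complex matrices. Then there exists a single matrix b ∈ M_n(ℂ) such that every C(x) is a polynomial in b. -/
import Mathlib


open Polynomial

/-- A square complex matrix is diagonalizable if it is similar to a diagonal matrix. -/
def IsDiagonalizableM {n : ℕ} (A : Matrix (Fin n) (Fin n) ℂ) : Prop :=
  ∃ P D : Matrix (Fin n) (Fin n) ℂ, IsUnit P.det ∧ D.IsDiag ∧ A = P * D * P⁻¹

/-- Conjugation by an invertible matrix as an algebra equivalence. -/
noncomputable def conjAE {n : ℕ} (P : Matrix (Fin n) (Fin n) ℂ) (h : IsUnit P.det) :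
    Matrix (Fin n) (Fin n) ℂ ≃ₐ[ℂ] Matrix (Fin n) (Fin n) ℂ where
  toFun m := P * m * P⁻¹
  invFun m := P⁻¹ * m * P
  left_inv m := by
    simp only [← Matrix.mul_assoc]
    rw [Matrix.nonsing_inv_mul _ h, Matrix.one_mul, Matrix.mul_assoc,
      Matrix.nonsing_inv_mul _ h, Matrix.mul_one]
  right_inv m := by
    simp only [← Matrix.mul_assoc]
    rw [Matrix.mul_nonsing_inv _ h, Matrix.one_mul, Matrix.mul_assoc,
      Matrix.mul_nonsing_inv _ h, Matrix.mul_one]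
  map_mul' a b := by
    have : P⁻¹ * P = 1 := Matrix.nonsing_inv_mul _ h
    calc P * (a * b) * P⁻¹ = P * a * (P⁻¹ * P) * b * P⁻¹ := by
          rw [this]; noncomm_ring
      _ = P * a * P⁻¹ * (P * b * P⁻¹) := by noncomm_ring
  map_add' a b := by noncomm_ring
  commutes' c := by
    simp [Algebra.algebraMap_eq_smul_one, Matrix.mul_smul, Matrix.smul_mul,
      Matrix.mul_nonsing_inv _ h]

lemma exists_annihilating {n : ℕ} {A : Matrix (Fin n) (Fin n) ℂ} (h : IsDiagonalizableM A) :
    ∃ s : Finset ℂ, aeval A (∏ d ∈ s, (X - Polynomial.C d)) = 0 := by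
  classical
  obtain ⟨P, D, hP, hD, rfl⟩ := h
  refine ⟨Finset.image (fun i => D i i) Finset.univ, ?_⟩
  set q : ℂ[X] := ∏ d ∈ Finset.image (fun i => D i i) Finset.univ, (X - Polynomial.C d) with hq
  have hDdiag : Matrix.diagonal (fun i => D i i) = D := hD.diagonal_diag
  have h1 : aeval (fun i => D i i : Fin n → ℂ) q = 0 := by
    funext i
    rw [aeval_fn_apply]
    have : (D i i) ∈ Finset.image (fun i => D i i) Finset.univ :=
      Finset.mem_image_of_mem _ (Finset.mem_univ i)
    rw [show (aeval (D i i)) q = q.eval (D i i) by rw [aeval_def]; rfl]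
    rw [hq, Polynomial.eval_prod]
    exact Finset.prod_eq_zero this (by simp)
  have h2 : aeval D q = 0 := by
    rw [← hDdiag]
    have := aeval_algHom_apply (Matrix.diagonalAlgHom (α := ℂ) (n := Fin n) ℂ) (fun i => D i i) q
    rw [show Matrix.diagonalAlgHom (α := ℂ) (n := Fin n) ℂ (fun i => D i i)
        = Matrix.diagonal (fun i => D i i) from rfl] at this
    rw [this, h1, map_zero]
  have h3 : P * D * P⁻¹ = conjAE P hP D := rfl
  rw [h3, show ((conjAE P hP) D) = ((conjAE P hP).toAlgHom D) from rfl,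
    aeval_algHom_apply, h2, map_zero]

lemma scalar_on_maxGen {K V : Type*} [Field K] [AddCommGroup V] [Module K V]
    (g : Module.End K V) (s : Finset K)
    (hs : aeval g (∏ d ∈ s, (X - Polynomial.C d)) = 0) (μ : K) :
    ∀ v ∈ g.maxGenEigenspace μ, g v = μ • v := by
  classical
  have key : ∀ (k : ℕ) (v : V), ((g - μ • (1 : Module.End K V)) ^ k) v = 0 → g v = μ • v := by
    intro k
    induction k with
    | zero =>
      intro v hv
      simp only [pow_zero, Module.End.one_apply] at hv
      simp [hv]
    | succ k ih =>
      intro v hv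
      set w := (g - μ • (1 : Module.End K V)) v with hw
      have hkw : ((g - μ • (1 : Module.End K V)) ^ k) w = 0 := by
        rw [hw, ← Module.End.mul_apply, ← pow_succ]; exact hv
      have hgw : g w = μ • w := ih w hkw
      have hw0 : w = 0 := by
        by_contra hw0
        have hev : g.HasEigenvector μ w := ⟨Module.End.mem_eigenspace_iff.mpr hgw, hw0⟩
        set r : K[X] := ∏ d ∈ s.erase μ, (X - Polynomial.C d) with hr
        have hrw : aeval g r w = 0 := by
          by_cases hμ : μ ∈ s
          · have hq : (∏ d ∈ s, (X - Polynomial.C d)) = r * (X - Polynomial.C μ) := by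
              rw [hr, Finset.prod_erase_mul _ _ hμ]
            have h0 := congrArg (fun (e : Module.End K V) => e v) hs
            simp only [hq, map_mul, Module.End.mul_apply, LinearMap.zero_apply] at h0
            have hXC : aeval g (X - Polynomial.C μ) v = w := by
              simp [hw, Module.algebraMap_end_apply, map_sub, aeval_X, aeval_C]
            rw [hXC] at h0
            exact h0
          · rw [hr, Finset.erase_eq_of_notMem hμ, hs, LinearMap.zero_apply]
        have heq := Module.End.aeval_apply_of_hasEigenvector (p := r) hev
        rw [hrw] at heq
        have hre : r.eval μ ≠ 0 := by
          rw [hr, Polynomial.eval_prod]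
          refine Finset.prod_ne_zero_iff.mpr fun d hd => ?_
          simp only [Polynomial.eval_sub, Polynomial.eval_X, Polynomial.eval_C]
          exact sub_ne_zero.mpr (Finset.ne_of_mem_erase hd).symm
        rcases smul_eq_zero.mp heq.symm with h | h
        · exact hre h
        · exact hw0 h
      have : g v - μ • v = 0 := by
        have := hw ▸ hw0
        simpa using this
      exact sub_eq_zero.mp this
  intro v hv
  obtain ⟨k, hk⟩ := (Module.End.mem_maxGenEigenspace _ _ _).mp hv
  exact key k v hk

/-- For a family of pairwise commuting diagonalizable `n × n` complex matrices, there is a single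
matrix `b` such that every member of the family is a polynomial in `b`. -/
theorem stmt3 {n : ℕ} {Ω : Type*} (C : Ω → Matrix (Fin n) (Fin n) ℂ)
    (hcomm : ∀ x y : Ω, C x * C y = C y * C x)
    (hdiag : ∀ x : Ω, IsDiagonalizableM (C x)) :
    ∃ b : Matrix (Fin n) (Fin n) ℂ, ∀ x : Ω, ∃ p : ℂ[X], C x = aeval b p := by
  classical
  set f : Ω → Module.End ℂ (Fin n → ℂ) := fun x => Matrix.toLinAlgEquiv' (C x) with hf
  have hC : ∀ x, C x = Matrix.toLinAlgEquiv'.symm (f x) := fun x => by simp [hf]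
  have hfcomm : ∀ x y, Commute (f x) (f y) := fun x y => by
    rw [Commute, SemiconjBy, hf]
    simp only [← map_mul, hcomm]
  have hann : ∀ x, ∃ s : Finset ℂ, aeval (f x) (∏ d ∈ s, (X - Polynomial.C d)) = 0 := by
    intro x
    obtain ⟨s, hs⟩ := exists_annihilating (hdiag x)
    refine ⟨s, ?_⟩
    rw [show f x = (Matrix.toLinAlgEquiv' (R := ℂ) (n := Fin n)).toAlgHom (C x) from rfl,
      aeval_algHom_apply, hs, map_zero]
  set V : (Ω → ℂ) → Submodule ℂ (Fin n → ℂ) := fun χ => ⨅ x, (f x).maxGenEigenspace (χ x)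
    with hV
  have hST : ⨆ χ, V χ = ⊤ :=
    Module.End.iSup_iInf_maxGenEigenspace_eq_top_of_iSup_maxGenEigenspace_eq_top_of_commute f
      (fun x y _ => hfcomm x y) (fun x => Module.End.iSup_maxGenEigenspace_eq_top (f x))
  have hInd : iSupIndep V :=
    Module.End.independent_iInf_maxGenEigenspace_of_forall_mapsTo f
      (fun i j φ => Module.End.mapsTo_maxGenEigenspace_of_comm (hfcomm j i) φ)
  have hscal : ∀ (x : Ω) (χ : Ω → ℂ) (v : Fin n → ℂ), v ∈ V χ → f x v = χ x • v := by
    intro x χ v hv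
    obtain ⟨s, hs⟩ := hann x
    exact scalar_on_maxGen (f x) s hs (χ x) v ((Submodule.mem_iInf _).mp hv x)
  have : Fintype {χ : Ω → ℂ // V χ ≠ ⊥} := hInd.fintypeNeBotOfFiniteDimensional
  obtain ⟨e⟩ : Nonempty ({χ : Ω → ℂ // V χ ≠ ⊥} ↪ ℕ) := nonempty_embedding_nat _
  set c : (Ω → ℂ) → ℂ := fun χ => if h : V χ ≠ ⊥ then ((e ⟨χ, h⟩ : ℕ) : ℂ) else 0 with hc
  set t : Finset (Ω → ℂ) := Finset.univ.image (Subtype.val : {χ // V χ ≠ ⊥} → (Ω → ℂ)) with ht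
  have hmem_t : ∀ χ, χ ∈ t ↔ V χ ≠ ⊥ := by
    intro χ
    simp only [ht, Finset.mem_image, Finset.mem_univ, true_and]
    constructor
    · rintro ⟨⟨χ', hχ'⟩, rfl⟩; exact hχ'
    · intro h; exact ⟨⟨χ, h⟩, rfl⟩
  have hcinj : Set.InjOn c ↑t := by
    intro χ1 h1 χ2 h2 hce
    rw [Finset.mem_coe, hmem_t] at h1 h2
    rw [hc] at hce
    simp only [dif_pos h1, dif_pos h2] at hce
    have := e.injective (Nat.cast_injective hce)
    exact congrArg Subtype.val this
  have hInt : DirectSum.IsInternal V :=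
    DirectSum.isInternal_submodule_of_iSupIndep_of_iSup_eq_top hInd hST
  set E := LinearEquiv.ofBijective (DirectSum.coeLinearMap V) hInt with hE
  set π : (Ω → ℂ) → Module.End ℂ (Fin n → ℂ) := fun χ =>
    (V χ).subtype ∘ₗ (DirectSum.component ℂ (Ω → ℂ) (fun χ => ↥(V χ)) χ) ∘ₗ
      (E.symm : (Fin n → ℂ) →ₗ[ℂ] _) with hπ
  have hπ_eq : ∀ χ χ' v, v ∈ V χ → π χ' v = if χ' = χ then v else 0 := by
    intro χ χ' v hv
    simp only [hπ, LinearMap.coe_comp, Function.comp_apply, LinearEquiv.coe_coe]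
    by_cases h : χ' = χ
    · subst h
      rw [if_pos rfl]
      have h1 : E.symm v χ' = ⟨v, hv⟩ := hInt.ofBijective_coeLinearMap_of_mem hv
      rw [show DirectSum.component ℂ (Ω → ℂ) (fun χ => ↥(V χ)) χ' (E.symm v)
          = E.symm v χ' from rfl, h1]
      rfl
    · rw [if_neg h]
      have h1 : E.symm v χ' = 0 := hInt.ofBijective_coeLinearMap_of_mem_ne (Ne.symm h) hv
      rw [show DirectSum.component ℂ (Ω → ℂ) (fun χ => ↥(V χ)) χ' (E.symm v)
          = E.symm v χ' from rfl, h1]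
      rfl
  set g : Module.End ℂ (Fin n → ℂ) := ∑ χ ∈ t, c χ • π χ with hg
  have hgv : ∀ χ v, v ∈ V χ → g v = c χ • v := by
    intro χ v hv
    by_cases hχ : χ ∈ t
    · rw [hg]
      simp only [LinearMap.sum_apply, LinearMap.smul_apply]
      rw [Finset.sum_eq_single χ]
      · rw [hπ_eq χ χ v hv, if_pos rfl]
      · intro χ' _ hne
        rw [hπ_eq χ χ' v hv, if_neg hne, smul_zero]
      · intro h; exact absurd hχ h
    · have hbot : V χ = ⊥ := by
        by_contra h; exact hχ ((hmem_t χ).mpr h)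
      rw [hbot, Submodule.mem_bot] at hv
      simp [hv]
  refine ⟨Matrix.toLinAlgEquiv'.symm g, fun x => ?_⟩
  set p : ℂ[X] := Lagrange.interpolate t c (fun χ => χ x) with hp
  refine ⟨p, ?_⟩
  have hfx : f x = aeval g p := by
    have hker : ∀ χ, V χ ≤ LinearMap.ker (aeval g p - f x) := by
      intro χ v hv
      rw [LinearMap.mem_ker, LinearMap.sub_apply, sub_eq_zero]
      have hfv : f x v = χ x • v := hscal x χ v hv
      by_cases hv0 : v = 0
      · simp [hv0]
      · have hχt : χ ∈ t := by
          rw [hmem_t]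
          intro hbot
          rw [hbot, Submodule.mem_bot] at hv
          exact hv0 hv
        have hev : g.HasEigenvector (c χ) v :=
          ⟨Module.End.mem_eigenspace_iff.mpr (hgv χ v hv), hv0⟩
        rw [Module.End.aeval_apply_of_hasEigenvector hev, hfv, hp,
          Lagrange.eval_interpolate_at_node (fun χ => χ x) hcinj hχt]
    have hker2 : LinearMap.ker (aeval g p - f x) = ⊤ := by
      rw [eq_top_iff, ← hST]
      exact iSup_le hker
    have := LinearMap.ker_eq_top.mp hker2
    exact (sub_eq_zero.mp this).symm
  rw [hC x, hfx]
  exact (aeval_algHom_apply (Matrix.toLinAlgEquiv'.symm.toAlgHom) g p).symm
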